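/- Let N ≥ 2, 0 < p < 1, 0 < q < p with 1 - 2p + q > 0. Define α = log((p-q)/(1-2p+q)), α₀ = (N-1)·log((1-p)/p) + N·α, β = log(q/(p-q)) - α, and Z = (1+exp α)^N + exp(α₀)·(1+exp(α+β))^N. Then (1/Z) · exp(α₀ + 2(α+β)) · (1 + exp(α+β))^{N-2} = q²/p. -/

import Mathlib

/-- In the Dandelion model with parameters `α = log((p-q)/(1-2p+q))`,
`α₀ = (N-1)log((1-p)/p) + Nα`, `β = log(q/(p-q)) - α` and
`Z = (1+e^α)^N + e^{α₀}(1+e^{α+β})^N`, the contribution of the `l₀ = 1`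
configurations to the joint moment `E[L₁L₂]` of two non-central nodes is
`(1/Z) e^{α₀+2(α+β)} (1+e^{α+β})^{N-2} = q²/p`. -/
theorem dandelion_l0_one_contribution (N : ℕ) (hN : 2 ≤ N) (p q : ℝ)
    (hp0 : 0 < p) (hp1 : p < 1) (hq0 : 0 < q) (hqp : q < p)
    (hpos : 1 - 2 * p + q > 0)
    (α α₀ β Z : ℝ)
    (hα : α = Real.log ((p - q) / (1 - 2 * p + q)))
    (hα₀ : α₀ = (N - 1 : ℝ) * Real.log ((1 - p) / p) + N * α)
    (hβ : β = Real.log (q / (p - q)) - α)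
    (hZ : Z = (1 + Real.exp α) ^ N + Real.exp α₀ * (1 + Real.exp (α + β)) ^ N) :
    (1 / Z) * Real.exp (α₀ + 2 * (α + β)) * (1 + Real.exp (α + β)) ^ (N - 2) =
      q ^ 2 / p := by
  obtain ⟨k, rfl⟩ : ∃ k, N = k + 2 := ⟨N - 2, by omega⟩
  have hpq : (0:ℝ) < p - q := by linarith
  have h1p : (0:ℝ) < 1 - p := by linarith
  have hx : (0:ℝ) < (p - q) / (1 - 2 * p + q) := div_pos hpq hpos
  have hy : (0:ℝ) < (1 - p) / p := div_pos h1p hp0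
  have hw : (0:ℝ) < q / (p - q) := div_pos hq0 hpq
  have hA : Real.exp α = (p - q) / (1 - 2 * p + q) := by
    rw [hα, Real.exp_log hx]
  have hAB : Real.exp (α + β) = q / (p - q) := by
    have : α + β = Real.log (q / (p - q)) := by rw [hβ]; ring
    rw [this, Real.exp_log hw]
  have hA0 : Real.exp α₀ =
      ((1 - p) / p) ^ (k + 1) * ((p - q) / (1 - 2 * p + q)) ^ (k + 2) := by
    rw [hα₀, Real.exp_add]
    have e1 : ((k + 2 : ℕ) - 1 : ℝ) * Real.log ((1 - p) / p)
        = ((k + 1 : ℕ) : ℝ) * Real.log ((1 - p) / p) := by push_cast; ring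
    rw [e1, Real.exp_nat_mul, Real.exp_log hy, Real.exp_nat_mul, hA]
  have hZval : Z = (1 - p) ^ (k + 1) / (1 - 2 * p + q) ^ (k + 2) := by
    rw [hZ, hA0, hA, hAB]
    have h1 : 1 + (p - q) / (1 - 2 * p + q) = (1 - p) / (1 - 2 * p + q) := by
      rw [eq_div_iff hpos.ne', add_mul, div_mul_cancel₀ _ hpos.ne']; ring
    have h2 : 1 + q / (p - q) = p / (p - q) := by field_simp; ring
    rw [h1, h2, div_pow, div_pow, div_pow, div_pow]
    field_simp
    ring
  have hZpos : (0:ℝ) < Z := by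
    rw [hZval]; positivity
  have hE : Real.exp (α₀ + 2 * (α + β)) = Real.exp α₀ * Real.exp (α + β) ^ 2 := by
    rw [two_mul, Real.exp_add, Real.exp_add, sq]
  have h2 : 1 + q / (p - q) = p / (p - q) := by field_simp; ring
  have hk2 : k + 2 - 2 = k := by omega
  rw [hk2, hE, hA0, hAB, hZval, h2, div_pow, div_pow, div_pow, div_pow]
  have hne : (1 - 2 * p + q) ≠ 0 := hpos.ne'
  generalize 1 - 2 * p + q = r at hne ⊢
  field_simp
  ring
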